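/- Let f : ℝ → ℝ be nondecreasing and right-continuous with f(x) = 0 for all x ≤ 0, and set F(w) = ∫₀^w f(u) du. Let c > 0, T > 0 and ν > 0 with c ≠ νT, and define H(ν') = ∫₀^T f((c − ν't)⁺) dt for ν' > 0. Set a = (c − νT)⁺ and let f(a−) denote the left limit of f at a. Then H has one-sided derivatives at ν given by H'_r(ν) = −(1/ν²)·[ F(c) − F(a) − (c − a)·f(a−) ] and H'_l(ν) = −(1/ν²)·[ F(c) − F(a) − (c − a)·f(a) ]. -/

import Mathlib

open Set Function Filter Topology MeasureTheory

/-- deterministic per-cycle core of Theorem 3 (service-speed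
derivative). For `f` nondecreasing, right-continuous, vanishing on `(-∞,0]`,
`F(w) = ∫₀^w f(u) du`, `c > 0`, `T > 0`, `ν > 0` with `c ≠ ν * T`,
`a = (c − νT)⁺` and `H(ν') = ∫₀^T f((c − ν't)⁺) dt`, the one-sided derivatives
of `H` at `ν` are
`H'_r(ν) = −(1/ν²)[F(c) − F(a) − (c − a)·f(a−)]` and
`H'_l(ν) = −(1/ν²)[F(c) − F(a) − (c − a)·f(a)]`. -/
theorem stmt_8 (f : ℝ → ℝ) (hf_mono : Monotone f)
    (hf_rc : ∀ x, ContinuousWithinAt f (Ici x) x)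
    (hf0 : ∀ x ≤ 0, f x = 0)
    (c T ν : ℝ) (hc : 0 < c) (hT : 0 < T) (hν : 0 < ν) (hcT : c ≠ ν * T) :
    HasDerivWithinAt (fun ν' => ∫ t in (0 : ℝ)..T, f (max (c - ν' * t) 0))
      (-(1 / ν ^ 2) *
        ((∫ u in (0 : ℝ)..c, f u) - (∫ u in (0 : ℝ)..(max (c - ν * T) 0), f u) -
          (c - max (c - ν * T) 0) * Function.leftLim f (max (c - ν * T) 0)))
      (Ici ν) ν ∧
    HasDerivWithinAt (fun ν' => ∫ t in (0 : ℝ)..T, f (max (c - ν' * t) 0))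
      (-(1 / ν ^ 2) *
        ((∫ u in (0 : ℝ)..c, f u) - (∫ u in (0 : ℝ)..(max (c - ν * T) 0), f u) -
          (c - max (c - ν * T) 0) * f (max (c - ν * T) 0)))
      (Iic ν) ν := by
  have hfm : Measurable f := hf_mono.measurable
  set φ : ℝ → ℝ := fun w => ∫ u in (0 : ℝ)..w, f u with hφ
  set a' : ℝ := c - ν * T with ha'
  have ha'ne : a' ≠ 0 := sub_ne_zero.2 hcT
  have hmax : ∀ x : ℝ, f (max x 0) = f x := by
    intro x
    rcases le_total x 0 with h | h
    · rw [max_eq_right h, hf0 x h, hf0 0 le_rfl]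
    · rw [max_eq_left h]
  -- left limits vanish on nonpositive points
  have hll0 : ∀ x : ℝ, x ≤ 0 → leftLim f x = 0 := by
    intro x hx
    have hne : (𝓝[<] x).NeBot := by infer_instance
    refine leftLim_eq_of_tendsto ?_
    have hev : ∀ᶠ y in 𝓝[<] x, f y = 0 :=
      eventually_nhdsWithin_of_forall fun y hy => hf0 y (le_of_lt (lt_of_lt_of_le hy hx))
    exact Tendsto.congr' (hev.mono fun y hy => hy.symm) tendsto_const_nhds
  -- φ vanishes at nonpositive points
  have hφ0 : ∀ x : ℝ, x ≤ 0 → φ x = 0 := by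
    intro x hx
    have : EqOn f (fun _ => (0 : ℝ)) (uIcc (0 : ℝ) x) := by
      intro u hu
      exact hf0 u (hu.2.trans (by simp [uIcc, hx]))
    simp only [hφ]
    rw [intervalIntegral.integral_congr this]
    simp
  -- right-sided FTC : derivative within Ici is f x
  have hF_right : ∀ x : ℝ, HasDerivWithinAt φ (f x) (Ici x) x := by
    intro x
    exact intervalIntegral.integral_hasDerivWithinAt_right
      (hf_mono.intervalIntegrable)
      (hfm.aestronglyMeasurable.stronglyMeasurableAtFilter)
      ((hf_rc x).mono Ioi_subset_Ici_self)
  -- left-sided FTC : derivative within Iic is leftLim f x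
  have hF_left : ∀ x : ℝ, HasDerivWithinAt φ (leftLim f x) (Iic x) x := by
    intro x
    refine intervalIntegral.integral_hasDerivWithinAt_of_tendsto_ae_right
      (hf_mono.intervalIntegrable)
      (hfm.aestronglyMeasurable.stronglyMeasurableAtFilter) ?_
    have h1 : 𝓝[Iic x] x ⊓ MeasureTheory.ae MeasureTheory.volume ≤ 𝓝[<] x := by
      have h2 : (𝓝[<] x : Filter ℝ) = 𝓝[Iic x] x ⊓ Filter.principal ({x}ᶜ) := by
        rw [← nhdsWithin_inter']
        congr 1
        ext y; simp [lt_iff_le_and_ne]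
      rw [h2]
      refine inf_le_inf_left _ (le_principal_iff.2 ?_)
      exact MeasureTheory.compl_mem_ae_iff.2 (MeasureTheory.measure_singleton x)
    exact (hf_mono.tendsto_leftLim x).mono_left h1
  -- substitution formula for ν' > 0
  have hsub : ∀ ν' : ℝ, 0 < ν' →
      (∫ t in (0 : ℝ)..T, f (c - ν' * t)) = (φ c - φ (c - ν' * T)) * ν'⁻¹ := by
    intro ν' hν'
    have h1 : (∫ t in (0 : ℝ)..T, f (c - ν' * t))
        = ν'⁻¹ • ∫ s in (ν' * 0)..(ν' * T), f (c - s) :=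
      intervalIntegral.integral_comp_mul_left (fun s => f (c - s)) hν'.ne'
    rw [h1, mul_zero, intervalIntegral.integral_comp_sub_left f c, sub_zero,
      ← intervalIntegral.integral_interval_sub_left
        (hf_mono.intervalIntegrable) (hf_mono.intervalIntegrable)]
    simp only [smul_eq_mul]
    ring
  -- the core derivative computation, parameterized over the side
  have core : ∀ (L : ℝ) (s t : Set ℝ), HasDerivWithinAt φ L t a' →
      MapsTo (fun ν' : ℝ => c - ν' * T) s t → (∀ᶠ ν' in 𝓝[s] ν, (0:ℝ) < ν') → ν ∈ s →
      HasDerivWithinAt (fun ν' => ∫ x in (0 : ℝ)..T, f (max (c - ν' * x) 0))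
        ((0 - L * (-T)) * ν⁻¹ + (φ c - φ a') * (-(ν ^ 2)⁻¹)) s ν := by
    intro L s t hφL hmap hev hνs
    have hu : HasDerivWithinAt (fun ν' : ℝ => c - ν' * T) (-T) s ν := by
      have : HasDerivAt (fun ν' : ℝ => c - ν' * T) (-T) ν := by
        simpa using ((hasDerivAt_id ν).mul_const T).const_sub c
      exact this.hasDerivWithinAt
    have hcomp : HasDerivWithinAt (fun ν' : ℝ => φ (c - ν' * T)) (L * (-T)) s ν := by
      have := HasDerivWithinAt.comp ν hφL hu hmap
      exact this
    have hnum : HasDerivWithinAt (fun ν' : ℝ => φ c - φ (c - ν' * T)) (0 - L * (-T)) s ν :=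
      (hasDerivWithinAt_const ν s (φ c)).sub hcomp
    have hinv : HasDerivWithinAt (fun ν' : ℝ => ν'⁻¹) (-(ν ^ 2)⁻¹) s ν :=
      (hasDerivAt_inv hν.ne').hasDerivWithinAt
    have hG : HasDerivWithinAt (fun ν' : ℝ => (φ c - φ (c - ν' * T)) * ν'⁻¹)
        ((0 - L * (-T)) * ν⁻¹ + (φ c - φ (c - ν * T)) * (-(ν ^ 2)⁻¹)) s ν := hnum.mul hinv
    have hEq : (fun ν' : ℝ => ∫ x in (0 : ℝ)..T, f (max (c - ν' * x) 0))
        =ᶠ[𝓝[s] ν] fun ν' => (φ c - φ (c - ν' * T)) * ν'⁻¹ := by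
      filter_upwards [hev] with ν' hν'
      simp only [hmax]
      exact hsub ν' hν'
    have hx : (∫ x in (0 : ℝ)..T, f (max (c - ν * x) 0)) = (φ c - φ (c - ν * T)) * ν⁻¹ := by
      simp only [hmax]; exact hsub ν hν
    exact (hG.congr_of_eventuallyEq hEq hx : _)
  -- equality of derivative values
  have heq : ∀ L L' : ℝ, (0 < a' → L = L') → (a' < 0 → L = 0 ∧ L' = 0) →
      (0 - L * (-T)) * ν⁻¹ + (φ c - φ a') * (-(ν ^ 2)⁻¹)
        = -(1 / ν ^ 2) * (φ c - φ (max a' 0) - (c - max a' 0) * L') := by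
    intro L L' h1 h2
    rcases lt_or_gt_of_ne ha'ne with hneg | hpos
    · obtain ⟨hL, hL'⟩ := h2 hneg
      rw [max_eq_right hneg.le, hφ0 a' hneg.le, hφ0 0 le_rfl, hL, hL']
      field_simp
      ring
    · rw [max_eq_left hpos.le, ← h1 hpos]
      have hca : c - a' = ν * T := by rw [ha']; ring
      rw [hca]
      field_simp
      ring
  have hνT : ν * T ≤ ν * T := le_rfl
  constructor
  · -- right derivative: Ici ν maps into Iic a'
    have hmap : MapsTo (fun ν' : ℝ => c - ν' * T) (Ici ν) (Iic a') := by
      intro ν' hν'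
      simp only [mem_Iic, ha']
      have : ν * T ≤ ν' * T := mul_le_mul_of_nonneg_right hν' hT.le
      linarith
    have hev : ∀ᶠ ν' in 𝓝[Ici ν] ν, (0:ℝ) < ν' :=
      eventually_nhdsWithin_of_forall fun y hy => lt_of_lt_of_le hν hy
    have h := core (leftLim f a') (Ici ν) (Iic a') (hF_left a') hmap hev self_mem_Ici
    have hval := heq (leftLim f a') (leftLim f (max a' 0))
      (fun hp => by rw [max_eq_left hp.le])
      (fun hn => ⟨hll0 a' hn.le, by rw [max_eq_right hn.le]; exact hll0 0 le_rfl⟩)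
    rw [← hval]
    exact h
  · -- left derivative: Iic ν maps into Ici a'
    have hmap : MapsTo (fun ν' : ℝ => c - ν' * T) (Iic ν) (Ici a') := by
      intro ν' hν'
      simp only [mem_Ici, ha']
      have : ν' * T ≤ ν * T := mul_le_mul_of_nonneg_right hν' hT.le
      linarith
    have hev : ∀ᶠ ν' in 𝓝[Iic ν] ν, (0:ℝ) < ν' := by
      have : ∀ᶠ ν' in 𝓝 ν, (0:ℝ) < ν' := eventually_gt_nhds hν
      exact this.filter_mono nhdsWithin_le_nhds
    have h := core (f a') (Iic ν) (Ici a') (hF_right a') hmap hev self_mem_Iic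
    have hval := heq (f a') (f (max a' 0))
      (fun hp => by rw [max_eq_left hp.le])
      (fun hn => ⟨hf0 a' hn.le, by rw [max_eq_right hn.le]; exact hf0 0 le_rfl⟩)
    rw [← hval]
    exact h
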